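/- Let a continuous-time query algorithm of duration T be given as in the context. Fix a Hermitian 𝕏×𝕏 matrix Γ and a unit vector v ∈ ℂ^𝕏, and define the progress function W(t) = Σ_{x,y∈𝕏} v_x \overline{v_y} Γ_{y,x} ⟨φ_y(t)|φ_x(t)⟩. Then W is differentiable on [0,T] and |dW/dt(t)| ≤ 2·max_{j∈{1,…,n}} ‖Γ∘Δ_j‖ for every t ∈ [0,T]. -/

import Mathlib

open scoped Matrix ComplexConjugate

/-- The operator (spectral) norm of a complex matrix. -/
noncomputable def matOpNorm {m : Type*} [Fintype m] [DecidableEq m]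
    (M : Matrix m m ℂ) : ℝ :=
  ‖Matrix.toEuclideanCLM (𝕜 := ℂ) M‖

/-- The adversary constraint matrix `Δ_j`, with entries `(Δ_j)_{x,y} = 1 - δ_{x_j,y_j}`. -/
def Delta {X Al : Type*} [DecidableEq Al] {n : ℕ} (inp : X → Fin n → Al) (j : Fin n) :
    Matrix X X ℂ :=
  fun x y => if inp x j = inp y j then 0 else 1

/-- The oracle Hamiltonian `H_Q(x) = ∑_j |j⟩⟨j| ⊗ h(x_j) ⊗ I_W` as a matrix on
`ℂ^n ⊗ ℂ^{Σ∪{0̄}} ⊗ H_W`, where the blank symbol `0̄` is `Option.none`. -/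
def oracleHam {X Al W : Type*} {n : ℕ} [DecidableEq Al] [DecidableEq W]
    (inp : X → Fin n → Al) (h : Al → Matrix (Option Al) (Option Al) ℂ) (x : X) :
    Matrix (Fin n × Option Al × W) (Fin n × Option Al × W) ℂ :=
  fun p q =>
    if p.1 = q.1 ∧ p.2.2 = q.2.2 then h (inp x p.1) p.2.1 q.2.1 else 0

section QAux

variable {m : Type*} [Fintype m] [DecidableEq m]

lemma qMatOpNorm_nonneg (M : Matrix m m ℂ) : 0 ≤ matOpNorm M := norm_nonneg _

lemma qclm_apply (A : Matrix m m ℂ) (u : EuclideanSpace ℂ m) (i : m) :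
    Matrix.toEuclideanCLM (𝕜 := ℂ) A u i = ∑ j, A i j * u j := rfl

lemma qnorm_clm_apply_le (A : Matrix m m ℂ) (u : EuclideanSpace ℂ m) :
    ‖Matrix.toEuclideanCLM (𝕜 := ℂ) A u‖ ≤ matOpNorm A * ‖u‖ :=
  (Matrix.toEuclideanCLM (𝕜 := ℂ) A).le_opNorm u

lemma qherm_inner_swap {A : Matrix m m ℂ} (hA : A.IsHermitian)
    (u w : EuclideanSpace ℂ m) :
    (inner ℂ (Matrix.toEuclideanCLM (𝕜 := ℂ) A u) w : ℂ)
      = inner ℂ u (Matrix.toEuclideanCLM (𝕜 := ℂ) A w) :=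
  (Matrix.isHermitian_iff_isSymmetric.mp hA) u w

lemma qsum_comm_3 {β : Type*} [AddCommMonoid β] {a b c : Type*} [Fintype a] [Fintype b] [Fintype c]
    (f : a → b → c → β) :
    ∑ x, ∑ y, ∑ k, f x y k = ∑ k, ∑ x, ∑ y, f x y k := by
  calc ∑ x, ∑ y, ∑ k, f x y k = ∑ x, ∑ k, ∑ y, f x y k :=
        Finset.sum_congr rfl fun x _ => Finset.sum_comm
    _ = ∑ k, ∑ x, ∑ y, f x y k := Finset.sum_comm

lemma qkey_cs {ι : Type*} [Fintype ι] (M : Matrix m m ℂ) (u w : m → EuclideanSpace ℂ ι) :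
    ‖∑ y, ∑ x, M y x * (inner ℂ (u y) (w x) : ℂ)‖
      ≤ matOpNorm M * (Real.sqrt (∑ y, ‖u y‖ ^ 2) * Real.sqrt (∑ x, ‖w x‖ ^ 2)) := by
  classical
  set c : ι → EuclideanSpace ℂ m := fun k => WithLp.toLp 2 (fun y => u y k) with hc
  set d : ι → EuclideanSpace ℂ m := fun k => WithLp.toLp 2 (fun x => w x k) with hd
  have hrw : (∑ y, ∑ x, M y x * (inner ℂ (u y) (w x) : ℂ))
      = ∑ k, (inner ℂ (c k) (Matrix.toEuclideanCLM (𝕜 := ℂ) M (d k)) : ℂ) := by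
    simp only [PiLp.inner_apply, RCLike.inner_apply, qclm_apply, Finset.mul_sum, Finset.sum_mul]
    rw [qsum_comm_3]
    refine Finset.sum_congr rfl fun k _ => Finset.sum_congr rfl fun y _ =>
      Finset.sum_congr rfl fun x _ => ?_
    simp only [hc, hd, PiLp.toLp_apply]
    ring
  rw [hrw]
  have h1 : ∀ k, ‖(inner ℂ (c k) (Matrix.toEuclideanCLM (𝕜 := ℂ) M (d k)) : ℂ)‖
      ≤ ‖c k‖ * (matOpNorm M * ‖d k‖) := by
    intro k
    refine (norm_inner_le_norm _ _).trans ?_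
    exact mul_le_mul_of_nonneg_left (qnorm_clm_apply_le M (d k)) (norm_nonneg _)
  have h2 : ‖∑ k, (inner ℂ (c k) (Matrix.toEuclideanCLM (𝕜 := ℂ) M (d k)) : ℂ)‖
      ≤ ∑ k, ‖c k‖ * (matOpNorm M * ‖d k‖) :=
    (norm_sum_le _ _).trans (Finset.sum_le_sum fun k _ => h1 k)
  refine h2.trans ?_
  have h3 : ∑ k, ‖c k‖ * (matOpNorm M * ‖d k‖)
      = matOpNorm M * ∑ k, ‖c k‖ * ‖d k‖ := by
    rw [Finset.mul_sum]; refine Finset.sum_congr rfl fun k _ => by ring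
  rw [h3]
  refine mul_le_mul_of_nonneg_left ?_ (qMatOpNorm_nonneg M)
  have hcs : (∑ k, ‖c k‖ * ‖d k‖) ^ 2 ≤ (∑ k, ‖c k‖ ^ 2) * ∑ k, ‖d k‖ ^ 2 :=
    Finset.sum_mul_sq_le_sq_mul_sq _ _ _
  have hnc : ∑ k, ‖c k‖ ^ 2 = ∑ y, ‖u y‖ ^ 2 := by
    simp only [PiLp.norm_sq_eq_of_L2]
    rw [Finset.sum_comm]
  have hnd : ∑ k, ‖d k‖ ^ 2 = ∑ x, ‖w x‖ ^ 2 := by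
    simp only [PiLp.norm_sq_eq_of_L2]
    rw [Finset.sum_comm]
  rw [← hnc, ← hnd, ← Real.sqrt_mul (Finset.sum_nonneg fun k _ => sq_nonneg _)]
  exact Real.le_sqrt_of_sq_le hcs

end QAux

section QTens

variable {S W : Type*} [Fintype S] [DecidableEq S] [Fintype W] [DecidableEq W]

/-- Tensor of a matrix on `S` with the identity on `W`. -/
def qtens (a : Matrix S S ℂ) : Matrix (S × W) (S × W) ℂ :=
  fun p q => if p.2 = q.2 then a p.1 q.1 else 0

lemma qtens_herm {a : Matrix S S ℂ} (ha : a.IsHermitian) : (qtens (W := W) a).IsHermitian := by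
  refine Matrix.IsHermitian.ext fun p q => ?_
  simp only [qtens]
  by_cases hw : p.2 = q.2
  · rw [if_pos (hw.symm), if_pos hw]
    exact ha.apply p.1 q.1
  · rw [if_neg (fun h => hw h.symm), if_neg hw, star_zero]

lemma qtens_apply (a : Matrix S S ℂ) (u : EuclideanSpace ℂ (S × W)) (p : S × W) :
    Matrix.toEuclideanCLM (𝕜 := ℂ) (qtens a) u p
      = Matrix.toEuclideanCLM (𝕜 := ℂ) a (WithLp.toLp 2 (fun s => u (s, p.2))) p.1 := by
  rw [qclm_apply, qclm_apply, Fintype.sum_prod_type]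
  simp only [qtens, ite_mul, zero_mul]
  simp [Finset.sum_ite_eq, Finset.mem_univ]

lemma qtens_norm_le (a : Matrix S S ℂ) (u : EuclideanSpace ℂ (S × W)) :
    ‖Matrix.toEuclideanCLM (𝕜 := ℂ) (qtens a) u‖ ≤ matOpNorm a * ‖u‖ := by
  set uw : W → EuclideanSpace ℂ S := fun w => WithLp.toLp 2 (fun s => u (s, w)) with huw
  have hsq : ‖Matrix.toEuclideanCLM (𝕜 := ℂ) (qtens a) u‖ ^ 2 ≤ (matOpNorm a * ‖u‖) ^ 2 := by
    rw [PiLp.norm_sq_eq_of_L2]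
    have h1 : ∑ p : S × W, ‖Matrix.toEuclideanCLM (𝕜 := ℂ) (qtens a) u p‖ ^ 2
        = ∑ w, ‖Matrix.toEuclideanCLM (𝕜 := ℂ) a (uw w)‖ ^ 2 := by
      rw [Fintype.sum_prod_type, Finset.sum_comm]
      refine Finset.sum_congr rfl fun w _ => ?_
      rw [PiLp.norm_sq_eq_of_L2]
      exact Finset.sum_congr rfl fun s _ => by rw [qtens_apply]
    rw [h1]
    have h2 : ∀ w : W, ‖Matrix.toEuclideanCLM (𝕜 := ℂ) a (uw w)‖ ^ 2
        ≤ (matOpNorm a) ^ 2 * ‖uw w‖ ^ 2 := by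
      intro w
      rw [← mul_pow]
      exact pow_le_pow_left₀ (norm_nonneg _) (qnorm_clm_apply_le a (uw w)) 2
    refine (Finset.sum_le_sum fun w _ => h2 w).trans ?_
    rw [← Finset.mul_sum, mul_pow]
    refine mul_le_mul_of_nonneg_left (le_of_eq ?_) (sq_nonneg _)
    rw [PiLp.norm_sq_eq_of_L2, Fintype.sum_prod_type, Finset.sum_comm]
    exact Finset.sum_congr rfl fun w _ => by rw [PiLp.norm_sq_eq_of_L2]
  have hle := Real.sqrt_le_sqrt hsq
  have hnn : (0:ℝ) ≤ matOpNorm a := norm_nonneg _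
  rwa [Real.sqrt_sq (norm_nonneg _),
    Real.sqrt_sq (mul_nonneg hnn (norm_nonneg _))] at hle

end QTens

section QBlk

variable {Al W : Type*} [Fintype Al] [DecidableEq Al] [Fintype W] [DecidableEq W] {n : ℕ}

/-- The `j`-th block of a vector in `ℂ^n ⊗ ℂ^{Σ∪{0̄}} ⊗ H_W`. -/
def qblk (j : Fin n) (ψ : EuclideanSpace ℂ (Fin n × Option Al × W)) :
    EuclideanSpace ℂ (Option Al × W) :=
  WithLp.toLp 2 (fun sw : Option Al × W => ψ (j, sw.1, sw.2))

lemma qblk_norm (ψ : EuclideanSpace ℂ (Fin n × Option Al × W)) :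
    ∑ j, ‖qblk j ψ‖ ^ 2 = ‖ψ‖ ^ 2 := by
  simp only [PiLp.norm_sq_eq_of_L2, Fintype.sum_prod_type]
  rfl

lemma qoracle_herm {X : Type*} (inp : X → Fin n → Al)
    (h : Al → Matrix (Option Al) (Option Al) ℂ) (hherm : ∀ y, (h y).IsHermitian) (x : X) :
    (oracleHam (W := W) inp h x).IsHermitian := by
  refine Matrix.IsHermitian.ext fun p q => ?_
  simp only [oracleHam]
  by_cases hc : q.1 = p.1 ∧ q.2.2 = p.2.2
  · rw [if_pos hc, if_pos ⟨hc.1.symm, hc.2.symm⟩, hc.1]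
    exact (hherm (inp x p.1)).apply p.2.1 q.2.1
  · rw [if_neg hc, if_neg (fun hc' => hc ⟨hc'.1.symm, hc'.2.symm⟩), star_zero]

lemma qoracle_inner {X : Type*} (inp : X → Fin n → Al)
    (h : Al → Matrix (Option Al) (Option Al) ℂ) (x : X)
    (ψ χ : EuclideanSpace ℂ (Fin n × Option Al × W)) :
    (inner ℂ ψ (Matrix.toEuclideanCLM (𝕜 := ℂ) (oracleHam inp h x) χ) : ℂ)
      = ∑ j, (inner ℂ (qblk j ψ)
          (Matrix.toEuclideanCLM (𝕜 := ℂ) (qtens (h (inp x j))) (qblk j χ)) : ℂ) := by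
  simp only [PiLp.inner_apply, RCLike.inner_apply]
  rw [Fintype.sum_prod_type]
  refine Finset.sum_congr rfl fun j _ => Finset.sum_congr rfl fun sw _ => ?_
  congr 1
  rw [qclm_apply, qclm_apply, Fintype.sum_prod_type]
  simp only [oracleHam, qtens, qblk, ite_and, ite_mul, zero_mul]
  simp [Finset.sum_ite_eq, Finset.mem_univ]

lemma qhmat_herm {HD Q : Matrix (Fin n × Option Al × W) (Fin n × Option Al × W) ℂ}
    (hHD : HD.IsHermitian) (hQ : Q.IsHermitian) (r : ℝ) :
    (HD + (r : ℂ) • Q).IsHermitian := by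
  refine Matrix.IsHermitian.ext fun i j => ?_
  rw [Matrix.add_apply, Matrix.add_apply, star_add, hHD.apply, Matrix.smul_apply,
    Matrix.smul_apply, smul_eq_mul, smul_eq_mul, star_mul', hQ.apply]
  simp [Complex.star_def, Complex.conj_ofReal]

end QBlk

/-- for any continuous-time query algorithm of duration `T`, any Hermitian
matrix `Γ` and any unit vector `v`, the progress function
`W(t) = ∑_{x,y} v_x conj(v_y) Γ_{y,x} ⟨φ_y(t)|φ_x(t)⟩` is differentiable on `[0,T]`
with `|dW/dt(t)| ≤ 2 maxⱼ ‖Γ ∘ Δⱼ‖`. -/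
theorem stmt1
    {Al W : Type*} [Fintype Al] [DecidableEq Al] [Fintype W] [DecidableEq W]
    {n : ℕ} (hn : 0 < n)
    {X : Type*} [Fintype X] [DecidableEq X] (inp : X → Fin n → Al)
    (T : ℝ) (hT : 0 ≤ T)
    (h : Al → Matrix (Option Al) (Option Al) ℂ)
    (hherm : ∀ y, (h y).IsHermitian) (hbound : ∀ y, matOpNorm (h y) ≤ 1)
    (HD : ℝ → Matrix (Fin n × Option Al × W) (Fin n × Option Al × W) ℂ)
    (hHDherm : ∀ t, (HD t).IsHermitian)
    (hHDcont : ∀ p q, Continuous fun t => HD t p q)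
    (α : ℝ → ℝ) (hαcont : Continuous α) (hα : ∀ t ∈ Set.Icc 0 T, |α t| ≤ 1)
    (φ : X → ℝ → EuclideanSpace ℂ (Fin n × Option Al × W))
    (hunit : ∀ x, ∀ t ∈ Set.Icc 0 T, ‖φ x t‖ = 1)
    (hschro : ∀ x, ∀ t ∈ Set.Icc 0 T,
      HasDerivWithinAt (φ x)
        ((-Complex.I) •
          (Matrix.toEuclideanCLM (𝕜 := ℂ)
            (HD t + (α t : ℂ) • oracleHam inp h x) (φ x t)))
        (Set.Icc 0 T) t)
    (Γ : Matrix X X ℂ) (hΓ : Γ.IsHermitian)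
    (v : X → ℂ) (hv : ∑ x, ‖v x‖ ^ 2 = 1) :
    ∀ t ∈ Set.Icc 0 T, ∃ W' : ℂ,
      HasDerivWithinAt
        (fun r => ∑ x, ∑ y, v x * conj (v y) * Γ y x * (inner ℂ (φ y r) (φ x r) : ℂ))
        W' (Set.Icc 0 T) t ∧
      ‖W'‖ ≤ 2 * ⨆ j : Fin n, matOpNorm (Γ ⊙ Delta inp j) := by
  classical
  intro t ht
  set a : ℂ := (α t : ℂ) with ha
  set Hmat : X → Matrix (Fin n × Option Al × W) (Fin n × Option Al × W) ℂ :=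
    fun x => HD t + a • oracleHam inp h x with hHmat
  set K : Al → (EuclideanSpace ℂ (Option Al × W) →L[ℂ] EuclideanSpace ℂ (Option Al × W)) :=
    fun c => Matrix.toEuclideanCLM (𝕜 := ℂ) (qtens (h c)) with hKdef
  set ψ : X → Fin n → EuclideanSpace ℂ (Option Al × W) :=
    fun x j => v x • qblk j (φ x t) with hψdef
  set Msup : ℝ := ⨆ j : Fin n, matOpNorm (Γ ⊙ Delta inp j) with hMsup
  have hbdd : BddAbove (Set.range fun j : Fin n => matOpNorm (Γ ⊙ Delta inp j)) :=
    Set.Finite.bddAbove (Set.finite_range _)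
  have hMle : ∀ j : Fin n, matOpNorm (Γ ⊙ Delta inp j) ≤ Msup := fun j => le_ciSup hbdd j
  have hMsup_nonneg : 0 ≤ Msup :=
    le_trans (qMatOpNorm_nonneg _) (hMle ⟨0, hn⟩)
  have hhermH : ∀ z : X, (Hmat z).IsHermitian :=
    fun z => qhmat_herm (hHDherm t) (qoracle_herm inp h hherm z) (α t)
  -- the derivative
  refine ⟨∑ x, ∑ y, v x * conj (v y) * Γ y x *
      ((inner ℂ (φ y t) ((-Complex.I) • (Matrix.toEuclideanCLM (𝕜 := ℂ) (Hmat x) (φ x t))) : ℂ)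
        + (inner ℂ ((-Complex.I) • (Matrix.toEuclideanCLM (𝕜 := ℂ) (Hmat y) (φ y t)))
            (φ x t) : ℂ)), ?_, ?_⟩
  · refine HasDerivWithinAt.fun_sum fun x _ => HasDerivWithinAt.fun_sum fun y _ => ?_
    exact ((hschro y t ht).inner ℂ (hschro x t ht)).const_mul _
  -- the bound
  have hterm : ∀ x y : X, v x * conj (v y) * Γ y x *
      ((inner ℂ (φ y t) ((-Complex.I) • (Matrix.toEuclideanCLM (𝕜 := ℂ) (Hmat x) (φ x t))) : ℂ)
        + (inner ℂ ((-Complex.I) • (Matrix.toEuclideanCLM (𝕜 := ℂ) (Hmat y) (φ y t)))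
            (φ x t) : ℂ))
      = ∑ j, Complex.I * a * ((Γ ⊙ Delta inp j) y x *
          ((inner ℂ (K (inp y j) (ψ y j)) (ψ x j) : ℂ)
            - (inner ℂ (ψ y j) (K (inp x j) (ψ x j)) : ℂ))) := by
    intro x y
    have e1 : (inner ℂ (φ y t)
          ((-Complex.I) • (Matrix.toEuclideanCLM (𝕜 := ℂ) (Hmat x) (φ x t))) : ℂ)
        = -Complex.I * inner ℂ (φ y t) (Matrix.toEuclideanCLM (𝕜 := ℂ) (Hmat x) (φ x t)) := by
      rw [inner_smul_right]
    have e2 : (inner ℂ ((-Complex.I) • (Matrix.toEuclideanCLM (𝕜 := ℂ) (Hmat y) (φ y t)))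
          (φ x t) : ℂ)
        = Complex.I * inner ℂ (φ y t) (Matrix.toEuclideanCLM (𝕜 := ℂ) (Hmat y) (φ x t)) := by
      rw [inner_smul_left, qherm_inner_swap (hhermH y)]
      rw [map_neg, Complex.conj_I, neg_neg]
    have e3 : ∀ z : X, (inner ℂ (φ y t)
          (Matrix.toEuclideanCLM (𝕜 := ℂ) (Hmat z) (φ x t)) : ℂ)
        = (inner ℂ (φ y t) (Matrix.toEuclideanCLM (𝕜 := ℂ) (HD t) (φ x t)) : ℂ)
          + a * ∑ j, (inner ℂ (qblk j (φ y t)) (K (inp z j) (qblk j (φ x t))) : ℂ) := by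
      intro z
      have hz : Matrix.toEuclideanCLM (𝕜 := ℂ) (Hmat z) (φ x t)
          = Matrix.toEuclideanCLM (𝕜 := ℂ) (HD t) (φ x t)
            + a • Matrix.toEuclideanCLM (𝕜 := ℂ) (oracleHam inp h z) (φ x t) := by
        ext p
        simp only [hHmat, qclm_apply, PiLp.add_apply, PiLp.smul_apply, smul_eq_mul,
          Matrix.add_apply, Matrix.smul_apply, Finset.mul_sum]
        rw [← Finset.sum_add_distrib]
        exact Finset.sum_congr rfl fun q _ => by ring
      rw [hz, inner_add_right, inner_smul_right, qoracle_inner inp h z, hKdef]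
    rw [e1, e2, e3 x, e3 y]
    rw [show ∀ (c D Sx Sy : ℂ), c * (-Complex.I * (D + a * Sx) + Complex.I * (D + a * Sy))
        = Complex.I * a * (c * (Sy - Sx)) from fun c D Sx Sy => by ring]
    rw [← Finset.sum_sub_distrib, Finset.mul_sum, Finset.mul_sum]
    refine Finset.sum_congr rfl fun j _ => ?_
    congr 1
    by_cases hxy : inp y j = inp x j
    · simp [Matrix.hadamard_apply, Delta, hxy, sub_self]
    · have hK1 : (inner ℂ (K (inp y j) (ψ y j)) (ψ x j) : ℂ)
          = conj (v y) * (v x * (inner ℂ (qblk j (φ y t)) (K (inp y j) (qblk j (φ x t))) : ℂ)) := by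
        rw [hψdef]
        simp only [map_smul]
        rw [inner_smul_left, inner_smul_right, hKdef,
          qherm_inner_swap (qtens_herm (hherm (inp y j)))]
      have hK2 : (inner ℂ (ψ y j) (K (inp x j) (ψ x j)) : ℂ)
          = conj (v y) * (v x * (inner ℂ (qblk j (φ y t)) (K (inp x j) (qblk j (φ x t))) : ℂ)) := by
        rw [hψdef]
        simp only [map_smul]
        rw [inner_smul_left, inner_smul_right]
      rw [hK1, hK2]
      simp only [Matrix.hadamard_apply, Delta, if_neg hxy, mul_one]
      ring
  have hW'eq : (∑ x, ∑ y, v x * conj (v y) * Γ y x *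
      ((inner ℂ (φ y t) ((-Complex.I) • (Matrix.toEuclideanCLM (𝕜 := ℂ) (Hmat x) (φ x t))) : ℂ)
        + (inner ℂ ((-Complex.I) • (Matrix.toEuclideanCLM (𝕜 := ℂ) (Hmat y) (φ y t)))
            (φ x t) : ℂ)))
      = Complex.I * a * ∑ j, ∑ y, ∑ x, (Γ ⊙ Delta inp j) y x *
          ((inner ℂ (K (inp y j) (ψ y j)) (ψ x j) : ℂ)
            - (inner ℂ (ψ y j) (K (inp x j) (ψ x j)) : ℂ)) := by
    calc (∑ x, ∑ y, v x * conj (v y) * Γ y x * (_ + _))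
        = ∑ x, ∑ y, ∑ j, Complex.I * a * ((Γ ⊙ Delta inp j) y x *
            ((inner ℂ (K (inp y j) (ψ y j)) (ψ x j) : ℂ)
              - (inner ℂ (ψ y j) (K (inp x j) (ψ x j)) : ℂ))) :=
          Finset.sum_congr rfl fun x _ => Finset.sum_congr rfl fun y _ => hterm x y
      _ = ∑ j, ∑ x, ∑ y, Complex.I * a * ((Γ ⊙ Delta inp j) y x *
            ((inner ℂ (K (inp y j) (ψ y j)) (ψ x j) : ℂ)
              - (inner ℂ (ψ y j) (K (inp x j) (ψ x j)) : ℂ))) := qsum_comm_3 _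
      _ = ∑ j, ∑ y, ∑ x, Complex.I * a * ((Γ ⊙ Delta inp j) y x *
            ((inner ℂ (K (inp y j) (ψ y j)) (ψ x j) : ℂ)
              - (inner ℂ (ψ y j) (K (inp x j) (ψ x j)) : ℂ))) :=
          Finset.sum_congr rfl fun j _ => Finset.sum_comm
      _ = Complex.I * a * ∑ j, ∑ y, ∑ x, (Γ ⊙ Delta inp j) y x *
            ((inner ℂ (K (inp y j) (ψ y j)) (ψ x j) : ℂ)
              - (inner ℂ (ψ y j) (K (inp x j) (ψ x j)) : ℂ)) := by
          simp only [← Finset.mul_sum]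
  rw [hW'eq, norm_mul, norm_mul, Complex.norm_I, one_mul, ha, Complex.norm_real, Real.norm_eq_abs]
  have hsplit : ∀ j : Fin n, ‖∑ y, ∑ x, (Γ ⊙ Delta inp j) y x *
        ((inner ℂ (K (inp y j) (ψ y j)) (ψ x j) : ℂ)
          - (inner ℂ (ψ y j) (K (inp x j) (ψ x j)) : ℂ))‖
      ≤ 2 * (Msup * (∑ x, ‖ψ x j‖ ^ 2)) := by
    intro j
    set B : ℝ := ∑ x, ‖ψ x j‖ ^ 2 with hB
    set A : ℝ := ∑ x, ‖K (inp x j) (ψ x j)‖ ^ 2 with hA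
    have hBnn : 0 ≤ B := Finset.sum_nonneg fun _ _ => sq_nonneg _
    have hAB : A ≤ B := by
      refine Finset.sum_le_sum fun x _ => ?_
      refine pow_le_pow_left₀ (norm_nonneg _) ?_ 2
      refine (qtens_norm_le (h (inp x j)) (ψ x j)).trans ?_
      calc matOpNorm (h (inp x j)) * ‖ψ x j‖ ≤ 1 * ‖ψ x j‖ :=
            mul_le_mul_of_nonneg_right (hbound _) (norm_nonneg _)
        _ = ‖ψ x j‖ := one_mul _
    have hsqrt : Real.sqrt A * Real.sqrt B ≤ B := by
      calc Real.sqrt A * Real.sqrt B ≤ Real.sqrt B * Real.sqrt B :=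
            mul_le_mul_of_nonneg_right (Real.sqrt_le_sqrt hAB) (Real.sqrt_nonneg _)
        _ = B := Real.mul_self_sqrt hBnn
    have hT1 := qkey_cs (Γ ⊙ Delta inp j) (fun y => K (inp y j) (ψ y j)) (fun x => ψ x j)
    have hT2 := qkey_cs (Γ ⊙ Delta inp j) (fun y => ψ y j) (fun x => K (inp x j) (ψ x j))
    rw [← hA, ← hB] at hT1
    rw [← hA, ← hB] at hT2
    have hgsplit : (∑ y, ∑ x, (Γ ⊙ Delta inp j) y x *
          ((inner ℂ (K (inp y j) (ψ y j)) (ψ x j) : ℂ)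
            - (inner ℂ (ψ y j) (K (inp x j) (ψ x j)) : ℂ)))
        = (∑ y, ∑ x, (Γ ⊙ Delta inp j) y x * (inner ℂ (K (inp y j) (ψ y j)) (ψ x j) : ℂ))
          - (∑ y, ∑ x, (Γ ⊙ Delta inp j) y x * (inner ℂ (ψ y j) (K (inp x j) (ψ x j)) : ℂ)) := by
      rw [← Finset.sum_sub_distrib]
      refine Finset.sum_congr rfl fun y _ => ?_
      rw [← Finset.sum_sub_distrib]
      exact Finset.sum_congr rfl fun x _ => by ring
    rw [hgsplit]
    calc ‖_ - _‖
        ≤ ‖∑ y, ∑ x, (Γ ⊙ Delta inp j) y x *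
              (inner ℂ (K (inp y j) (ψ y j)) (ψ x j) : ℂ)‖
          + ‖∑ y, ∑ x, (Γ ⊙ Delta inp j) y x *
              (inner ℂ (ψ y j) (K (inp x j) (ψ x j)) : ℂ)‖ := by
          rw [sub_eq_add_neg]
          exact (norm_add_le _ _).trans_eq (by rw [norm_neg])
      _ ≤ matOpNorm (Γ ⊙ Delta inp j) * (Real.sqrt A * Real.sqrt B)
          + matOpNorm (Γ ⊙ Delta inp j) * (Real.sqrt B * Real.sqrt A) := add_le_add hT1 hT2
      _ = 2 * (matOpNorm (Γ ⊙ Delta inp j) * (Real.sqrt A * Real.sqrt B)) := by ring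
      _ ≤ 2 * (Msup * B) := by
          refine mul_le_mul_of_nonneg_left
            (mul_le_mul (hMle j) hsqrt
              (mul_nonneg (Real.sqrt_nonneg _) (Real.sqrt_nonneg _)) hMsup_nonneg)
            (by norm_num)
  have hsum : ‖∑ j, ∑ y, ∑ x, (Γ ⊙ Delta inp j) y x *
        ((inner ℂ (K (inp y j) (ψ y j)) (ψ x j) : ℂ)
          - (inner ℂ (ψ y j) (K (inp x j) (ψ x j)) : ℂ))‖
      ≤ ∑ j : Fin n, 2 * (Msup * (∑ x, ‖ψ x j‖ ^ 2)) :=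
    (norm_sum_le _ _).trans (Finset.sum_le_sum fun j _ => hsplit j)
  have hψsum : ∑ j : Fin n, ∑ x, ‖ψ x j‖ ^ 2 = 1 := by
    rw [Finset.sum_comm]
    calc ∑ x, ∑ j, ‖ψ x j‖ ^ 2
        = ∑ x, ‖v x‖ ^ 2 * ∑ j, ‖qblk j (φ x t)‖ ^ 2 := by
          refine Finset.sum_congr rfl fun x _ => ?_
          rw [Finset.mul_sum]
          refine Finset.sum_congr rfl fun j _ => ?_
          simp only [hψdef]
          rw [norm_smul, mul_pow]
      _ = ∑ x, ‖v x‖ ^ 2 := by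
          refine Finset.sum_congr rfl fun x _ => ?_
          rw [qblk_norm, hunit x t ht, one_pow, mul_one]
      _ = 1 := hv
  calc |α t| * ‖∑ j, ∑ y, ∑ x, (Γ ⊙ Delta inp j) y x *
        ((inner ℂ (K (inp y j) (ψ y j)) (ψ x j) : ℂ)
          - (inner ℂ (ψ y j) (K (inp x j) (ψ x j)) : ℂ))‖
      ≤ 1 * (∑ j : Fin n, 2 * (Msup * (∑ x, ‖ψ x j‖ ^ 2))) :=
        mul_le_mul (hα t ht) hsum (norm_nonneg _) one_pos.le
    _ = 2 * (Msup * ∑ j : Fin n, ∑ x, ‖ψ x j‖ ^ 2) := by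
        rw [one_mul, ← Finset.mul_sum, ← Finset.mul_sum]
    _ = 2 * Msup := by rw [hψsum, mul_one]
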